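/- Let (X_n) be i.i.d. random variables in [0,1] with mean μ ≥ ξ, let μ̂_n be their empirical mean, and define μ̲_n = μ̂_n - sqrt(log(4Kn²/δ)/(2n)). Fix ε ∈ (0, μ - ξ) and let n₀ = (1/(Δ-ε)²)*log((4*sqrt(K/δ)/(Δ-ε)²)*log(5*sqrt(K/δ)/(Δ-ε)²)) with Δ = μ - ξ. Then E[∑_{n=1}^∞ 1{μ̲_n ≤ ξ}] ≤ n₀ + 1/(2ε²). -/

import Mathlib

set_option maxHeartbeats 1000000


open Real

lemma hoeffding_core {p : ℝ} (hp0 : 0 ≤ p) (hp1 : p ≤ 1) (l : ℝ) :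
    1 - p + p * exp l ≤ exp (l * p + l ^ 2 / 8) := by
  have hu : ∀ t : ℝ, 0 < 1 - p + p * exp t := by
    intro t
    rcases eq_or_lt_of_le hp1 with h | h
    · simpa [h] using exp_pos t
    · have := exp_pos t
      nlinarith
  set F : ℝ → ℝ := fun t => t * p + t ^ 2 / 8 - Real.log (1 - p + p * exp t) with hF
  set G : ℝ → ℝ := fun t => p + t / 4 - p * exp t / (1 - p + p * exp t) with hG
  have hderivF : ∀ t : ℝ, HasDerivAt F (G t) t := by
    intro t
    have h1 : HasDerivAt (fun t : ℝ => 1 - p + p * exp t) (p * exp t) t := by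
      simpa using ((Real.hasDerivAt_exp t).const_mul p).const_add (1 - p)
    have h2 : HasDerivAt (fun t : ℝ => Real.log (1 - p + p * exp t))
        (p * exp t / (1 - p + p * exp t)) t := by
      simpa [div_eq_mul_inv, mul_comm, Function.comp_def] using
        (Real.hasDerivAt_log (hu t).ne').comp t h1
    have h3 : HasDerivAt (fun t : ℝ => t * p + t ^ 2 / 8) (p + t / 4) t := by
      have := ((hasDerivAt_pow 2 t).div_const 8)
      have h4 := ((hasDerivAt_id t).mul_const p).add ((hasDerivAt_pow 2 t).div_const 8)
      exact h4.congr_deriv (by norm_num; ring)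
    simpa [hF, hG, Pi.sub_def] using h3.sub h2
  have hderivG : ∀ t : ℝ, HasDerivAt G
      (1 / 4 - p * exp t * (1 - p) / (1 - p + p * exp t) ^ 2) t := by
    intro t
    have h1 : HasDerivAt (fun t : ℝ => 1 - p + p * exp t) (p * exp t) t := by
      simpa using ((Real.hasDerivAt_exp t).const_mul p).const_add (1 - p)
    have h2 : HasDerivAt (fun t : ℝ => p * exp t) (p * exp t) t :=
      (Real.hasDerivAt_exp t).const_mul p
    have h3 := h2.div h1 (hu t).ne'
    have h4 : HasDerivAt (fun t : ℝ => p + t / 4) (1 / 4) t := by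
      simpa using ((hasDerivAt_id t).div_const 4).const_add p
    have h5 := h4.sub h3
    exact h5.congr_deriv (by field_simp; ring)
  have hG_nonneg : ∀ t : ℝ, 0 ≤ 1 / 4 - p * exp t * (1 - p) / (1 - p + p * exp t) ^ 2 := by
    intro t
    rw [sub_nonneg, div_le_iff₀ (pow_pos (hu t) 2)]
    nlinarith [sq_nonneg ((1 - p) - p * exp t), (hu t).le]
  have hGmono : Monotone G := by
    have : ∀ t, 0 ≤ deriv G t := fun t => by
      rw [(hderivG t).deriv]; exact hG_nonneg t
    exact monotone_of_deriv_nonneg (fun t => (hderivG t).differentiableAt) this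
  have hG0 : G 0 = 0 := by
    simp [hG]
  have hF0 : F 0 = 0 := by simp [hF]
  have hFnonneg : ∀ t : ℝ, 0 ≤ F t := by
    intro t
    rcases le_total 0 t with h | h
    · have hmono : MonotoneOn F (Set.Ici (0:ℝ)) := by
        refine monotoneOn_of_deriv_nonneg (convex_Ici 0)
          (Continuous.continuousOn (by
            fun_prop (disch := exact fun x => (hu x).ne'))) ?_ ?_
        · intro x _
          exact (hderivF x).differentiableAt.differentiableWithinAt
        · intro x hx
          rw [(hderivF x).deriv]
          rw [interior_Ici] at hx
          calc (0:ℝ) = G 0 := hG0.symm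
          _ ≤ G x := hGmono (le_of_lt hx)
      have := hmono (Set.self_mem_Ici) (Set.mem_Ici.2 h) h
      rwa [hF0] at this
    · have hmono : AntitoneOn F (Set.Iic (0:ℝ)) := by
        refine antitoneOn_of_deriv_nonpos (convex_Iic 0)
          (Continuous.continuousOn (by
            fun_prop (disch := exact fun x => (hu x).ne'))) ?_ ?_
        · intro x _
          exact (hderivF x).differentiableAt.differentiableWithinAt
        · intro x hx
          rw [(hderivF x).deriv]
          rw [interior_Iic] at hx
          calc G x ≤ G 0 := hGmono (le_of_lt hx)
          _ = 0 := hG0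
      have := hmono (Set.mem_Iic.2 h) (Set.self_mem_Iic) h
      rwa [hF0] at this
  have := hFnonneg l
  have hlog : Real.log (1 - p + p * exp l) ≤ l * p + l ^ 2 / 8 := by
    simp only [hF] at this; linarith
  calc 1 - p + p * exp l = exp (Real.log (1 - p + p * exp l)) := (exp_log (hu l)).symm
  _ ≤ exp (l * p + l ^ 2 / 8) := exp_le_exp.2 hlog


open Real

lemma sqle_helper {v u k : ℝ} (hv : 0 ≤ v) (hk : 0 ≤ k) (hu : 0 ≤ u)
    (h : v ^ 2 ≤ k ^ 2 * u ^ 2) : v ≤ k * u := by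
  calc v = Real.sqrt (v ^ 2) := (Real.sqrt_sq hv).symm
  _ ≤ Real.sqrt (k ^ 2 * u ^ 2) := Real.sqrt_le_sqrt h
  _ = k * u := by
      rw [show k ^ 2 * u ^ 2 = (k * u) ^ 2 by ring, Real.sqrt_sq (by positivity)]

lemma An1 {a c t : ℝ} (ha : 0 < a) (hc : 0 < c) (ht : 0 < t) :
    Real.log (2 * a * t) ≤ t * c - (1 - Real.log (2 * a / c)) := by
  have h1 : Real.log (2 * a * t) = Real.log (t * c) + Real.log (2 * a / c) := by
    rw [← Real.log_mul (by positivity) (by positivity)]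
    congr 1
    field_simp
  have h2 : Real.log (t * c) ≤ t * c - 1 := log_le_sub_one_of_pos (by positivity)
  linarith

lemma An2 {a c t : ℝ} (ha : 0 < a) (hc : 0 < c) (hbig : Real.exp 1 * c < 2 * a)
    (ht : (1 / c) * Real.log ((4 * a / c) * Real.log (5 * a / c)) ≤ t) :
    Real.log (2 * a * t) ≤ t * c := by
  have he1 : (2.7182818283 : ℝ) < Real.exp 1 := exp_one_gt_d9
  have h4A : 4 * a / c = 4 * (a / c) := by ring
  have h5A : 5 * a / c = 5 * (a / c) := by ring
  rw [h4A, h5A] at ht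
  set A : ℝ := a / c with hAdef
  have hA_pos : 0 < A := by positivity
  have haAc : a = A * c := by rw [hAdef]; field_simp
  have hbigA : Real.exp 1 < 2 * A := by
    rw [hAdef, lt_div_iff₀ hc] at *
    nlinarith
  have hs_pos : (0:ℝ) < 5 * A := by positivity
  have hse : Real.exp 1 < 5 * A := by nlinarith
  have hlogs1 : 1 < Real.log (5 * A) := by
    calc (1:ℝ) = Real.log (Real.exp 1) := (Real.log_exp 1).symm
    _ < Real.log (5 * A) := Real.log_lt_log (exp_pos 1) hse
  have hPp_lb : Real.exp 1 < 4 * A * Real.log (5 * A) := by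
    nlinarith [exp_pos 1]
  have hPp_pos : 0 < 4 * A * Real.log (5 * A) := lt_trans (exp_pos 1) hPp_lb
  have hL1 : 1 < Real.log (4 * A * Real.log (5 * A)) := by
    calc (1:ℝ) = Real.log (Real.exp 1) := (Real.log_exp 1).symm
    _ < _ := Real.log_lt_log (exp_pos 1) hPp_lb
  set L := Real.log (4 * A * Real.log (5 * A)) with hLdef
  have hLpos : 0 < L := lt_trans zero_lt_one hL1
  have hPp_le : 4 * A * Real.log (5 * A) ≤ (5 * A) ^ 2 := by
    have hlog_le : Real.log (5 * A) ≤ 5 * A - 1 := log_le_sub_one_of_pos hs_pos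
    nlinarith
  have hL2log : L ≤ 2 * Real.log (5 * A) := by
    calc L ≤ Real.log ((5 * A) ^ 2) :=
          (Real.log_le_log_iff hPp_pos (by positivity)).2 hPp_le
    _ = 2 * Real.log (5 * A) := by rw [Real.log_pow]; push_cast; ring
  set n0 : ℝ := (1 / c) * L with hn0def
  have hn0_pos : 0 < n0 := mul_pos (by positivity) hLpos
  have hn0c : n0 * c = L := by rw [hn0def]; field_simp
  have ht_pos : 0 < t := lt_of_lt_of_le hn0_pos ht
  have h2an0 : 2 * a * n0 ≤ 4 * A * Real.log (5 * A) := by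
    have hexpand : 2 * a * n0 = 2 * (A * L) := by
      rw [hn0def, haAc]; field_simp
    rw [hexpand]
    nlinarith
  have hgn0 : Real.log (2 * a * n0) ≤ n0 * c := by
    calc Real.log (2 * a * n0) ≤ Real.log (4 * A * Real.log (5 * A)) :=
          (Real.log_le_log_iff (by positivity) hPp_pos).2 h2an0
    _ = L := hLdef.symm
    _ = n0 * c := hn0c.symm
  have hsplit : Real.log (2 * a * t) = Real.log (2 * a * n0) + Real.log (t / n0) := by
    rw [← Real.log_mul (by positivity) (by positivity)]
    congr 1
    field_simp
  have hlog_t : Real.log (t / n0) ≤ t / n0 - 1 := log_le_sub_one_of_pos (by positivity)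
  have hfrac : t / n0 - 1 ≤ (t - n0) * c := by
    rw [div_sub_one hn0_pos.ne', div_le_iff₀ hn0_pos]
    nlinarith
  rw [hsplit]
  nlinarith

lemma An3 {a c ε : ℝ} (ha : 1 < a) (hc : 0 < c) (hε : 0 < ε)
    (hL : Real.log ((4 * a / c) * Real.log (5 * a / c)) < 0)
    (hne : (Real.sqrt c + ε - 1) ^ 2 ≤ 2 * a / Real.exp 1 ∨ Real.sqrt c + ε < 1) :
    1 / (Real.exp (2 * ε ^ 2) - 1)
      ≤ 1 / (2 * ε ^ 2) + Real.log ((4 * a / c) * Real.log (5 * a / c)) / c := by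
  have he1 : (2.7182818283 : ℝ) < Real.exp 1 := exp_one_gt_d9
  set u : ℝ := Real.sqrt c with hu
  have hu_pos : 0 < u := Real.sqrt_pos.2 hc
  have hu_sq : u ^ 2 = c := Real.sq_sqrt hc.le
  have hL' := hL
  rw [show 4 * a / c = 4 * (a / c) by ring, show 5 * a / c = 5 * (a / c) by ring] at hL' ⊢
  set A : ℝ := a / c with hAdef
  have hA_pos : 0 < A := by positivity
  have haAc : a = A * c := by rw [hAdef]; field_simp
  -- Step A : c < 5 * a
  have hA5 : 1 < 5 * A := by
    by_contra hcon
    push_neg at hcon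
    have h5ac : 5 * a ≤ c := by
      rw [haAc]; nlinarith
    have hc5 : 5 < c := by linarith
    have hu_gt : (2.2:ℝ) < u := by
      rw [hu, show (2.2:ℝ) = Real.sqrt (2.2 ^ 2) by rw [Real.sqrt_sq (by norm_num)]]
      exact Real.sqrt_lt_sqrt (by norm_num) (by norm_num; linarith)
    rcases hne with h1 | h2
    · have hb : 2 * a / Real.exp 1 ≤ (2 / 5 * c) / 2.7182818283 :=
        div_le_div₀ (by linarith) (by linarith) (by norm_num) he1.le
      have hb2 : (2 / 5 * c) / 2.7182818283 ≤ 0.14716 * c := by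
        rw [div_le_iff₀ (by norm_num)]
        nlinarith
      have hb3 : (u + ε - 1) ^ 2 ≤ 0.3837 ^ 2 * u ^ 2 := by
        rw [hu_sq]; nlinarith
      have hb4 : u + ε - 1 ≤ 0.3837 * u :=
        sqle_helper (by linarith) (by norm_num) hu_pos.le hb3
      linarith
    · linarith
  have hs_pos : (0:ℝ) < 5 * A := by positivity
  have hlogs_pos : 0 < Real.log (5 * A) := log_pos hA5
  have hPp_pos : 0 < 4 * A * Real.log (5 * A) := by positivity
  have hPp_lt1 : 4 * A * Real.log (5 * A) < 1 := by
    by_contra hcon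
    push_neg at hcon
    exact absurd (Real.log_nonneg hcon) (not_le.2 hL')
  have hs2 : 5 * A < 2 := by
    by_contra hcon
    push_neg at hcon
    have hlog2 : (0.6931471803:ℝ) < Real.log 2 := Real.log_two_gt_d9
    have hmono : Real.log 2 ≤ Real.log (5 * A) :=
      (Real.log_le_log_iff (by norm_num) hs_pos).2 hcon
    nlinarith
  have hc52 : 5 / 2 < c := by
    have : 5 * a < 2 * c := by rw [haAc]; nlinarith
    linarith
  have hu158 : (1.5811:ℝ) < u := by
    rw [hu, show (1.5811:ℝ) = Real.sqrt (1.5811 ^ 2) by rw [Real.sqrt_sq (by norm_num)]]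
    exact Real.sqrt_lt_sqrt (by norm_num) (by norm_num; linarith)
  have hne1 : (u + ε - 1) ^ 2 ≤ 2 * a / Real.exp 1 := by
    rcases hne with h1 | h2
    · exact h1
    · linarith
  have hv_pos : (0:ℝ) ≤ u + ε - 1 := by linarith
  have h2a_ub : 2 * a < 4 / 5 * c := by rw [haAc]; nlinarith
  -- ε is small
  have hb1 : (u + ε - 1) ^ 2 ≤ 0.54251 ^ 2 * u ^ 2 := by
    have hstep : 2 * a / Real.exp 1 ≤ (4 / 5 * c) / 2.7182818283 :=
      div_le_div₀ (by linarith) (by linarith) (by norm_num) he1.le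
    have hstep2 : (4 / 5 * c) / 2.7182818283 ≤ 0.54251 ^ 2 * c := by
      rw [div_le_iff₀ (by norm_num)]
      nlinarith
    calc (u + ε - 1) ^ 2 ≤ 2 * a / Real.exp 1 := hne1
    _ ≤ 0.54251 ^ 2 * c := le_trans hstep hstep2
    _ = 0.54251 ^ 2 * u ^ 2 := by rw [hu_sq]
  have hvk : u + ε - 1 ≤ 0.54251 * u :=
    sqle_helper hv_pos (by norm_num) hu_pos.le hb1
  have hε_ub : ε ≤ 0.2767 := by nlinarith [hvk, hu158]
  -- s ≥ 1.44
  have hs144 : 1.44 ≤ 5 * A := by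
    by_contra hcon
    push_neg at hcon
    have h5a : 5 * a < 1.44 * c := by rw [haAc]; nlinarith
    have hcbig : (3.4722:ℝ) < c := by linarith
    have hubig : (1.86338:ℝ) < u := by
      rw [hu, show (1.86338:ℝ) = Real.sqrt (1.86338 ^ 2) by rw [Real.sqrt_sq (by norm_num)]]
      exact Real.sqrt_lt_sqrt (by norm_num) (by norm_num; linarith)
    have hb2 : (u + ε - 1) ^ 2 ≤ 0.46037 ^ 2 * u ^ 2 := by
      have hstep : 2 * a / Real.exp 1 ≤ (0.576 * c) / 2.7182818283 :=
        div_le_div₀ (by linarith) (by linarith) (by norm_num) he1.le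
      have hstep2 : (0.576 * c) / 2.7182818283 ≤ 0.46037 ^ 2 * c := by
        rw [div_le_iff₀ (by norm_num)]
        nlinarith
      calc (u + ε - 1) ^ 2 ≤ 2 * a / Real.exp 1 := hne1
      _ ≤ 0.46037 ^ 2 * c := le_trans hstep hstep2
      _ = 0.46037 ^ 2 * u ^ 2 := by rw [hu_sq]
    have hvk2 : u + ε - 1 ≤ 0.46037 * u :=
      sqle_helper hv_pos (by norm_num) hu_pos.le hb2
    linarith
  -- lower bound on L
  have hlog_ge : 1 - (5 * A)⁻¹ ≤ Real.log (5 * A) := by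
    have h := log_le_sub_one_of_pos (x := (5 * A)⁻¹) (by positivity)
    rw [Real.log_inv] at h
    linarith
  have hPp_ge : 0.352 ≤ 4 * A * Real.log (5 * A) := by
    have hkey := mul_le_mul_of_nonneg_left hlog_ge (by positivity : (0:ℝ) ≤ 4 * A)
    have hid : (4 * A) * (1 - (5 * A)⁻¹) = 4 / 5 * (5 * A) - 4 / 5 := by
      field_simp
    rw [hid] at hkey
    nlinarith
  have hL_ge : -1.05 ≤ Real.log (4 * A * Real.log (5 * A)) := by
    have h1 : Real.log 0.352 ≤ Real.log (4 * A * Real.log (5 * A)) :=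
      (Real.log_le_log_iff (by norm_num) hPp_pos).2 hPp_ge
    have h2 : (-1.05:ℝ) ≤ Real.log 0.352 := by
      rw [Real.le_log_iff_exp_le (by norm_num)]
      have hexp105 : (2.854:ℝ) ≤ Real.exp 1.05 := by
        have h3 : Real.exp 1.05 = Real.exp 1 * Real.exp 0.05 := by
          rw [← Real.exp_add]; norm_num
        have h4 : (1.05:ℝ) ≤ Real.exp 0.05 := by
          have := Real.add_one_le_exp (0.05:ℝ)
          linarith
        rw [h3]
        nlinarith [exp_pos 1]
      have h5 : Real.exp (-1.05:ℝ) = (Real.exp 1.05)⁻¹ := by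
        rw [← Real.exp_neg]
      rw [h5]
      calc (Real.exp 1.05)⁻¹ ≤ (2.854:ℝ)⁻¹ := by
            apply inv_anti₀ (by norm_num) hexp105
      _ ≤ 0.352 := by norm_num
    linarith
  -- final computation
  set x : ℝ := 2 * ε ^ 2 with hx
  have hx_pos : 0 < x := by positivity
  have hx_ub : x ≤ 0.1532 := by nlinarith [hε_ub, hε.le, sq_nonneg ε]
  have hquad : 1 + x + x ^ 2 / 2 ≤ Real.exp x := by
    have h := Real.sum_le_exp_of_nonneg hx_pos.le 3
    have hsum : ∑ i ∈ Finset.range 3, x ^ i / (Nat.factorial i : ℝ) = 1 + x + x ^ 2 / 2 := by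
      simp [Finset.sum_range_succ, Nat.factorial]
    rw [hsum] at h
    exact h
  have hden : (0:ℝ) < Real.exp x - 1 := by
    nlinarith [hquad, hx_pos, sq_nonneg x]
  have h1 : 1 / (Real.exp x - 1) ≤ 1 / (x + x ^ 2 / 2) :=
    one_div_le_one_div_of_le (by positivity) (by linarith)
  have h2 : 1 / (x + x ^ 2 / 2) = 1 / x - 1 / (x + 2) := by
    field_simp
    ring
  have h3 : -Real.log (4 * A * Real.log (5 * A)) / c ≤ 1 / (x + 2) := by
    have ha1 : -Real.log (4 * A * Real.log (5 * A)) / c ≤ 1.05 / (5 / 2) :=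
      div_le_div₀ (by norm_num) (by linarith) (by norm_num) hc52.le
    have ha2 : (0.42:ℝ) ≤ 1 / (x + 2) := by
      rw [le_div_iff₀ (by linarith)]
      nlinarith [hx_ub, hx_pos]
    calc -Real.log (4 * A * Real.log (5 * A)) / c ≤ 1.05 / (5 / 2) := ha1
    _ = 0.42 := by norm_num
    _ ≤ 1 / (x + 2) := ha2
  calc 1 / (Real.exp x - 1) ≤ 1 / x - 1 / (x + 2) := by rw [← h2]; exact h1
  _ ≤ 1 / x + Real.log (4 * A * Real.log (5 * A)) / c := by
      have heq : Real.log (4 * A * Real.log (5 * A)) / c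
          = -(-Real.log (4 * A * Real.log (5 * A)) / c) := by ring
      linarith

lemma An2L {a c : ℝ} (ha : 0 < a) (hc : 0 < c) (hbig : Real.exp 1 * c < 2 * a) :
    1 < Real.log ((4 * a / c) * Real.log (5 * a / c)) := by
  have he1 : (2.7182818283 : ℝ) < Real.exp 1 := exp_one_gt_d9
  rw [show 4 * a / c = 4 * (a / c) by ring, show 5 * a / c = 5 * (a / c) by ring]
  set A : ℝ := a / c with hAdef
  have hA_pos : 0 < A := by positivity
  have hbigA : Real.exp 1 < 2 * A := by
    have h1 : Real.exp 1 * c < 2 * A * c := by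
      calc Real.exp 1 * c < 2 * a := hbig
      _ = 2 * A * c := by rw [hAdef]; field_simp
    exact lt_of_mul_lt_mul_right h1 hc.le
  have hs_pos : (0:ℝ) < 5 * A := by positivity
  have hse : Real.exp 1 < 5 * A := by nlinarith
  have hlogs1 : 1 < Real.log (5 * A) := by
    calc (1:ℝ) = Real.log (Real.exp 1) := (Real.log_exp 1).symm
    _ < Real.log (5 * A) := Real.log_lt_log (exp_pos 1) hse
  have hPp_lb : Real.exp 1 < 4 * A * Real.log (5 * A) := by
    nlinarith [exp_pos 1]
  calc (1:ℝ) = Real.log (Real.exp 1) := (Real.log_exp 1).symm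
  _ < _ := Real.log_lt_log (exp_pos 1) hPp_lb

open Real MeasureTheory ProbabilityTheory ENNReal

section
variable {Ω : Type*} [MeasurableSpace Ω] (P : Measure Ω) [IsProbabilityMeasure P]

lemma exp_mul_integrable (Y : Ω → ℝ) (hY : Measurable Y)
    (hbdd : ∀ ω, Y ω ∈ Set.Icc (0:ℝ) 1) (l : ℝ) :
    Integrable (fun ω => exp (l * Y ω)) P := by
  refine Integrable.mono' (integrable_const (exp |l|))
    ((hY.const_mul l).exp.aestronglyMeasurable) (ae_of_all _ fun ω => ?_)
  rw [Real.norm_eq_abs, abs_exp]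
  refine exp_le_exp.2 ?_
  rcases le_total l 0 with h | h
  · calc l * Y ω ≤ 0 := mul_nonpos_of_nonpos_of_nonneg h (hbdd ω).1
    _ ≤ |l| := abs_nonneg l
  · calc l * Y ω ≤ l * 1 := by nlinarith [(hbdd ω).2, (hbdd ω).1]
    _ ≤ |l| := by rw [mul_one]; exact le_abs_self l

lemma mgf_le_of_mem_Icc (Y : Ω → ℝ) (hY : Measurable Y)
    (hbdd : ∀ ω, Y ω ∈ Set.Icc (0:ℝ) 1) (μ0 : ℝ) (hμ0 : ∫ ω, Y ω ∂P = μ0) (l : ℝ) :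
    mgf Y P l ≤ exp (l * μ0 + l ^ 2 / 8) := by
  have hYint : Integrable Y P := by
    refine Integrable.mono' (integrable_const 1) hY.aestronglyMeasurable
      (ae_of_all _ fun ω => ?_)
    rw [Real.norm_eq_abs, abs_of_nonneg (hbdd ω).1]; exact (hbdd ω).2
  have hμ0mem : μ0 ∈ Set.Icc (0:ℝ) 1 := by
    constructor
    · rw [← hμ0]; exact integral_nonneg fun ω => (hbdd ω).1
    · rw [← hμ0]
      calc ∫ ω, Y ω ∂P ≤ ∫ ω, (1:ℝ) ∂P :=
            integral_mono hYint (integrable_const 1) (fun ω => (hbdd ω).2)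
        _ = 1 := by simp
  have hpt : ∀ ω, exp (l * Y ω) ≤ 1 - Y ω + Y ω * exp l := by
    intro ω
    have hx := hbdd ω
    have := convexOn_exp.2 (Set.mem_univ (0:ℝ)) (Set.mem_univ l)
      (by linarith [hx.2] : (0:ℝ) ≤ 1 - Y ω) hx.1 (by ring)
    simpa [smul_eq_mul, mul_comm] using this
  calc mgf Y P l = ∫ ω, exp (l * Y ω) ∂P := rfl
  _ ≤ ∫ ω, (1 - Y ω + Y ω * exp l) ∂P := by
      refine integral_mono (exp_mul_integrable P Y hY hbdd l) ?_ hpt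
      exact ((integrable_const 1).sub hYint).add (hYint.mul_const _)
  _ = 1 - μ0 + μ0 * exp l := by
      have h1 : Integrable (fun ω => 1 - Y ω) P := (integrable_const 1).sub hYint
      have h2 : Integrable (fun ω => Y ω * exp l) P := hYint.mul_const _
      rw [integral_add h1 h2]
      have h3 : ∫ ω, (1 - Y ω) ∂P = 1 - μ0 := by
        rw [integral_sub (integrable_const 1) hYint, hμ0]; simp
      have h4 : ∫ ω, Y ω * exp l ∂P = μ0 * exp l := by
        rw [integral_mul_const, hμ0]
      rw [h3, h4]
  _ ≤ exp (l * μ0 + l ^ 2 / 8) := hoeffding_core hμ0mem.1 hμ0mem.2 l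

variable (X : ℕ → Ω → ℝ) (hXmeas : ∀ n, Measurable (X n))
    (hindep : iIndepFun X P)
    (hbdd : ∀ n ω, X n ω ∈ Set.Icc (0:ℝ) 1)
    (μ : ℝ) (hmean : ∀ n, ∫ ω, X n ω ∂P = μ)

include hXmeas hindep hbdd hmean in
lemma chernoff_lower (t : ℕ) (y : ℝ) (hy : 0 ≤ y) :
    P {ω | ∑ k ∈ Finset.range t, X k ω ≤ t * μ - t * y}
      ≤ ENNReal.ofReal (exp (-2 * t * y ^ 2)) := by
  set l : ℝ := -(4 * y) with hl
  have hl0 : l ≤ 0 := by simp [hl]; positivity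
  have hint : ∀ i ∈ Finset.range t, Integrable (fun ω => exp (l * X i ω)) P :=
    fun i _ => exp_mul_integrable P (X i) (hXmeas i) (hbdd i) l
  have hintsum : Integrable (fun ω => exp (l * (∑ i ∈ Finset.range t, X i) ω)) P :=
    hindep.integrable_exp_mul_sum hXmeas hint
  have hchern := measure_le_le_exp_mul_mgf (X := ∑ i ∈ Finset.range t, X i)
    (μ := P) (t := l) (t * μ - t * y) hl0 hintsum
  have hmgf : mgf (∑ i ∈ Finset.range t, X i) P l ≤ exp (t * (l * μ + l ^ 2 / 8)) := by
    rw [hindep.mgf_sum hXmeas]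
    calc ∏ i ∈ Finset.range t, mgf (X i) P l
        ≤ ∏ _i ∈ Finset.range t, exp (l * μ + l ^ 2 / 8) := by
          refine Finset.prod_le_prod (fun i _ => mgf_nonneg) fun i _ => ?_
          exact mgf_le_of_mem_Icc P (X i) (hXmeas i) (hbdd i) μ (hmean i) l
    _ = exp (t * (l * μ + l ^ 2 / 8)) := by
          rw [Finset.prod_const, Finset.card_range, ← Real.exp_nat_mul]
  have hset : {ω | (∑ i ∈ Finset.range t, X i) ω ≤ t * μ - t * y}
      = {ω | ∑ k ∈ Finset.range t, X k ω ≤ t * μ - t * y} := by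
    simp [Finset.sum_apply]
  have hfinal : (P {ω | ∑ k ∈ Finset.range t, X k ω ≤ t * μ - t * y}).toReal
      ≤ exp (-2 * t * y ^ 2) := by
    rw [← hset]
    refine hchern.trans ?_
    calc exp (-l * (t * μ - t * y)) * mgf (∑ i ∈ Finset.range t, X i) P l
        ≤ exp (-l * (t * μ - t * y)) * exp (t * (l * μ + l ^ 2 / 8)) := by
          exact mul_le_mul_of_nonneg_left hmgf (exp_pos _).le
    _ = exp (-2 * t * y ^ 2) := by
          rw [← Real.exp_add]
          congr 1
          rw [hl]; ring
  calc P {ω | ∑ k ∈ Finset.range t, X k ω ≤ t * μ - t * y}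
      = ENNReal.ofReal ((P {ω | ∑ k ∈ Finset.range t, X k ω ≤ t * μ - t * y}).toReal) := by
        rw [ENNReal.ofReal_toReal (measure_ne_top _ _)]
  _ ≤ ENNReal.ofReal (exp (-2 * t * y ^ 2)) := ENNReal.ofReal_le_ofReal hfinal

end


open MeasureTheory ProbabilityTheory ENNReal

/-- Lemma B.2: for a good arm (mean `μ ≥ ξ`), the expected number of sample
counts `n` at which the lower confidence bound is at most `ξ` is bounded by
`n₀ + 1/(2ε²)`. -/
theorem expected_lcb_below_threshold
    {Ω : Type*} [MeasurableSpace Ω] (P : Measure Ω) [IsProbabilityMeasure P]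
    (X : ℕ → Ω → ℝ) (hXmeas : ∀ n, Measurable (X n))
    (hindep : iIndepFun X P)
    (hident : ∀ n, Measure.map (X n) P = Measure.map (X 0) P)
    (hbdd : ∀ n ω, X n ω ∈ Set.Icc (0:ℝ) 1)
    (μ : ℝ) (hmean : ∀ n, ∫ ω, X n ω ∂P = μ)
    (K : ℕ) (hK : 1 ≤ K) (δ : ℝ) (hδ : δ ∈ Set.Ioo (0:ℝ) 1)
    (ξ : ℝ) (hξ : ξ ≤ μ) (ε : ℝ) (hε : ε ∈ Set.Ioo (0:ℝ) (μ - ξ))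
    (n₀ : ℝ)
    (hn₀ : n₀ = (1 / ((μ - ξ) - ε) ^ 2) *
        Real.log ((4 * Real.sqrt ((K : ℝ) / δ) / ((μ - ξ) - ε) ^ 2)
          * Real.log (5 * Real.sqrt ((K : ℝ) / δ) / ((μ - ξ) - ε) ^ 2))) :
    (∫⁻ ω, ∑' n : ℕ,
        Set.indicator
          {ω' | (∑ k ∈ Finset.range (n + 1), X k ω') / (n + 1)
              - Real.sqrt (Real.log (4 * K * ((n : ℝ) + 1) ^ 2 / δ)
                  / (2 * ((n : ℝ) + 1))) ≤ ξ}
          (fun _ => (1 : ℝ≥0∞)) ω ∂P)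
      ≤ ENNReal.ofReal (n₀ + 1 / (2 * ε ^ 2)) := by
  obtain ⟨hε0, hεΔ⟩ := hε
  obtain ⟨hδ0, hδ1⟩ := hδ
  set a : ℝ := Real.sqrt ((K:ℝ)/δ) with hadef
  have hKδ : 1 < (K:ℝ)/δ := by
    have hK1 : (1:ℝ) ≤ K := by exact_mod_cast hK
    rw [lt_div_iff₀ hδ0]; nlinarith
  have ha1 : 1 < a := by
    rw [hadef, show (1:ℝ) = Real.sqrt 1 by simp]
    exact Real.sqrt_lt_sqrt (by norm_num) hKδ
  have ha0 : (0:ℝ) < a := lt_trans one_pos ha1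
  have hasq : a ^ 2 = (K:ℝ)/δ := Real.sq_sqrt (le_of_lt (lt_trans one_pos hKδ))
  set c : ℝ := ((μ - ξ) - ε) ^ 2 with hcdef
  have hΔε : 0 < (μ - ξ) - ε := by linarith
  have hc0 : (0:ℝ) < c := by positivity
  have hsqrtc : Real.sqrt c = (μ - ξ) - ε := Real.sqrt_sq hΔε.le
  have hn₀' : n₀ = (1 / c) * Real.log ((4 * a / c) * Real.log (5 * a / c)) := hn₀
  set A : ℕ → Set Ω := fun n => {ω' | (∑ k ∈ Finset.range (n + 1), X k ω') / (n + 1)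
              - Real.sqrt (Real.log (4 * K * ((n : ℝ) + 1) ^ 2 / δ)
                  / (2 * ((n : ℝ) + 1))) ≤ ξ} with hAdef
  have hAmeas : ∀ n, MeasurableSet (A n) := by
    intro n
    apply measurableSet_le
    · exact ((Finset.measurable_sum _ (fun k _ => hXmeas k)).div_const _).sub measurable_const
    · exact measurable_const
  have hLHS : (∫⁻ ω, ∑' n : ℕ, Set.indicator (A n) (fun _ => (1:ℝ≥0∞)) ω ∂P)
      = ∑' n, P (A n) := by
    rw [lintegral_tsum (f := fun n => (A n).indicator (fun _ => (1:ℝ≥0∞)))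
      (fun n => (measurable_one.indicator (hAmeas n)).aemeasurable)]
    exact tsum_congr fun n => by
      rw [lintegral_indicator_const (hAmeas n), one_mul]
  rw [hLHS]
  have ht_pos : ∀ n : ℕ, (0:ℝ) < (n:ℝ) + 1 := fun n => by positivity
  have hradius : ∀ n : ℕ, Real.log (4 * K * ((n:ℝ)+1) ^ 2 / δ) / (2 * ((n:ℝ)+1))
      = Real.log (2 * a * ((n:ℝ)+1)) / ((n:ℝ)+1) := by
    intro n
    have h1 : 4 * (K:ℝ) * ((n:ℝ)+1) ^ 2 / δ = (2 * a * ((n:ℝ)+1)) ^ 2 := by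
      have h2 : (2 * a * ((n:ℝ)+1)) ^ 2 = 4 * a ^ 2 * ((n:ℝ)+1) ^ 2 := by ring
      rw [h2, hasq]
      field_simp
    rw [h1, Real.log_pow]
    push_cast
    field_simp
  -- Chernoff per-n bound
  have hPbound : ∀ n : ℕ, Real.log (2 * a * ((n:ℝ)+1)) ≤ ((n:ℝ)+1) * c →
      P (A n) ≤ ENNReal.ofReal (Real.exp (-2 * ((n:ℝ)+1) * ε ^ 2)) := by
    intro n hg
    have hsub : A n ⊆ {ω | ∑ k ∈ Finset.range (n+1), X k ω
        ≤ ((n+1:ℕ):ℝ) * μ - ((n+1:ℕ):ℝ) * ε} := by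
      intro ω hω
      simp only [hAdef, Set.mem_setOf_eq] at hω ⊢
      have hr : Real.sqrt (Real.log (4 * K * ((n:ℝ)+1) ^ 2 / δ) / (2 * ((n:ℝ)+1)))
          ≤ (μ - ξ) - ε := by
        rw [hradius n, ← hsqrtc]
        apply Real.sqrt_le_sqrt
        rw [div_le_iff₀ (ht_pos n)]
        linarith
      have h2 : (∑ k ∈ Finset.range (n+1), X k ω) / ((n:ℝ)+1) ≤ μ - ε := by linarith
      rw [div_le_iff₀ (ht_pos n)] at h2
      push_cast
      linarith
    calc P (A n) ≤ P {ω | ∑ k ∈ Finset.range (n+1), X k ω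
        ≤ ((n+1:ℕ):ℝ) * μ - ((n+1:ℕ):ℝ) * ε} := measure_mono hsub
    _ ≤ ENNReal.ofReal (Real.exp (-2 * ((n+1:ℕ):ℝ) * ε ^ 2)) :=
        chernoff_lower P X hXmeas hindep hbdd μ hmean (n+1) ε hε0.le
    _ = ENNReal.ofReal (Real.exp (-2 * ((n:ℝ)+1) * ε ^ 2)) := by push_cast; rfl
  -- geometric bound
  have hgeo_le : ∑' n : ℕ, ENNReal.ofReal (Real.exp (-2 * ((n:ℝ)+1) * ε ^ 2))
      ≤ ENNReal.ofReal (1 / (Real.exp (2 * ε ^ 2) - 1)) := by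
    set q : ℝ := Real.exp (-(2 * ε ^ 2)) with hqdef
    have hq0 : 0 < q := Real.exp_pos _
    have hq1 : q < 1 := by
      rw [hqdef]
      have h := Real.exp_lt_exp.2 (show -(2 * ε ^ 2) < 0 by nlinarith)
      rwa [Real.exp_zero] at h
    have hexgt1 : 1 < Real.exp (2 * ε ^ 2) := by
      nlinarith [Real.add_one_le_exp (2 * ε ^ 2)]
    have hterm : ∀ n : ℕ, ENNReal.ofReal (Real.exp (-2 * ((n:ℝ)+1) * ε ^ 2))
        = (ENNReal.ofReal q) ^ (n+1) := by
      intro n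
      rw [← ENNReal.ofReal_pow hq0.le]
      congr 1
      rw [hqdef, ← Real.exp_nat_mul]
      congr 1
      push_cast
      ring
    calc ∑' n : ℕ, ENNReal.ofReal (Real.exp (-2 * ((n:ℝ)+1) * ε ^ 2))
        = ∑' n : ℕ, (ENNReal.ofReal q) ^ (n+1) := tsum_congr hterm
    _ = ENNReal.ofReal q * ∑' n : ℕ, (ENNReal.ofReal q) ^ n := by
        simp_rw [pow_succ']
        rw [ENNReal.tsum_mul_left]
    _ = ENNReal.ofReal q * (1 - ENNReal.ofReal q)⁻¹ := by rw [ENNReal.tsum_geometric]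
    _ = ENNReal.ofReal q * (ENNReal.ofReal (1 - q))⁻¹ := by
        rw [← ENNReal.ofReal_one, ← ENNReal.ofReal_sub _ hq0.le]
    _ = ENNReal.ofReal (q / (1 - q)) := by
        rw [ENNReal.ofReal_div_of_pos (by linarith), div_eq_mul_inv]
    _ ≤ ENNReal.ofReal (1 / (Real.exp (2 * ε ^ 2) - 1)) := by
        apply ENNReal.ofReal_le_ofReal
        have hepos := Real.exp_pos (2 * ε ^ 2)
        have hinv : (Real.exp (2 * ε ^ 2))⁻¹ < 1 := inv_lt_one_of_one_lt₀ hexgt1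
        rw [hqdef, Real.exp_neg]
        rw [div_le_div_iff₀ (by linarith) (by linarith)]
        have hid : (Real.exp (2 * ε ^ 2))⁻¹ * (Real.exp (2 * ε ^ 2) - 1)
            = 1 * (1 - (Real.exp (2 * ε ^ 2))⁻¹) := by
          field_simp
        exact le_of_eq hid
  -- main case split
  by_cases hbig : Real.exp 1 * c < 2 * a
  · -- Case 1 : counting argument
    have hL1 : 1 < Real.log ((4 * a / c) * Real.log (5 * a / c)) := An2L ha0 hc0 hbig
    have hn₀pos : 0 < n₀ := by
      rw [hn₀']
      have : (0:ℝ) < 1 / c := by positivity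
      nlinarith
    have hbound : ∀ n : ℕ, P (A n) ≤ (if ((n:ℝ)+1) < n₀ then (1:ℝ≥0∞) else 0)
        + ENNReal.ofReal (Real.exp (-2 * ((n:ℝ)+1) * ε ^ 2)) := by
      intro n
      by_cases hcase : ((n:ℝ)+1) < n₀
      · rw [if_pos hcase]
        exact le_add_right prob_le_one
      · rw [if_neg hcase, zero_add]
        apply hPbound n
        apply An2 ha0 hc0 hbig
        rw [← hn₀']
        exact not_lt.1 hcase
    have hcount : ∑' n : ℕ, (if ((n:ℝ)+1) < n₀ then (1:ℝ≥0∞) else 0)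
        ≤ ENNReal.ofReal n₀ := by
      set N : ℕ := ⌈n₀⌉₊ with hNdef
      have hN1 : 1 ≤ N := Nat.one_le_iff_ne_zero.2 (by
        simp only [hNdef, ne_eq, Nat.ceil_eq_zero, not_le]
        exact hn₀pos)
      have hvanish : ∀ n ∉ Finset.range (N - 1),
          (if ((n:ℝ)+1) < n₀ then (1:ℝ≥0∞) else 0) = 0 := by
        intro n hn
        rw [Finset.mem_range, not_lt] at hn
        rw [if_neg]
        push_neg
        have h1 : n₀ ≤ (N:ℝ) := Nat.le_ceil n₀
        have h2 : (N:ℝ) ≤ (n:ℝ) + 1 := by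
          have : N ≤ n + 1 := by omega
          exact_mod_cast this
        linarith
      rw [tsum_eq_sum hvanish]
      calc ∑ n ∈ Finset.range (N - 1), (if ((n:ℝ)+1) < n₀ then (1:ℝ≥0∞) else 0)
          ≤ ∑ _n ∈ Finset.range (N - 1), (1:ℝ≥0∞) :=
            Finset.sum_le_sum fun n _ => by split <;> simp
      _ = ((N - 1 : ℕ) : ℝ≥0∞) := by simp
      _ ≤ ENNReal.ofReal n₀ := by
          rw [← ENNReal.ofReal_natCast]
          apply ENNReal.ofReal_le_ofReal
          have h3 : (N:ℝ) < n₀ + 1 := Nat.ceil_lt_add_one hn₀pos.le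
          have h4 : ((N - 1 : ℕ):ℝ) = (N:ℝ) - 1 := by
            have : (1:ℕ) ≤ N := hN1
            push_cast [Nat.cast_sub this]
            ring
          rw [h4]
          linarith
    calc ∑' n, P (A n)
        ≤ ∑' n : ℕ, ((if ((n:ℝ)+1) < n₀ then (1:ℝ≥0∞) else 0)
          + ENNReal.ofReal (Real.exp (-2 * ((n:ℝ)+1) * ε ^ 2))) :=
          ENNReal.tsum_le_tsum hbound
    _ = (∑' n : ℕ, (if ((n:ℝ)+1) < n₀ then (1:ℝ≥0∞) else 0))
          + ∑' n : ℕ, ENNReal.ofReal (Real.exp (-2 * ((n:ℝ)+1) * ε ^ 2)) :=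
          ENNReal.tsum_add
    _ ≤ ENNReal.ofReal n₀ + ENNReal.ofReal (1 / (Real.exp (2 * ε ^ 2) - 1)) :=
          add_le_add hcount hgeo_le
    _ ≤ ENNReal.ofReal n₀ + ENNReal.ofReal (1 / (2 * ε ^ 2)) := by
          apply add_le_add_right
          apply ENNReal.ofReal_le_ofReal
          have hxle : 2 * ε ^ 2 ≤ Real.exp (2 * ε ^ 2) - 1 := by
            linarith [Real.add_one_le_exp (2 * ε ^ 2)]
          exact one_div_le_one_div_of_le (by positivity) hxle
    _ = ENNReal.ofReal (n₀ + 1 / (2 * ε ^ 2)) :=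
          (ENNReal.ofReal_add hn₀pos.le (by positivity)).symm
  · -- Case 2 : 2a ≤ e c
    push_neg at hbig
    have hgall : ∀ n : ℕ, Real.log (2 * a * ((n:ℝ)+1)) ≤ ((n:ℝ)+1) * c := by
      intro n
      have h1 := An1 ha0 hc0 (ht_pos n)
      have h2 : Real.log (2 * a / c) ≤ 1 := by
        rw [Real.log_le_iff_le_exp (by positivity), div_le_iff₀ hc0]
        calc 2 * a ≤ Real.exp 1 * c := hbig
        _ = Real.exp 1 * c := rfl
      linarith
    have hSle : ∑' n, P (A n) ≤ ENNReal.ofReal (1 / (Real.exp (2 * ε ^ 2) - 1)) :=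
      le_trans (ENNReal.tsum_le_tsum fun n => hPbound n (hgall n)) hgeo_le
    have hxle : 2 * ε ^ 2 ≤ Real.exp (2 * ε ^ 2) - 1 := by
      linarith [Real.add_one_le_exp (2 * ε ^ 2)]
    by_cases hn₀sgn : 0 ≤ n₀
    · refine hSle.trans (ENNReal.ofReal_le_ofReal ?_)
      have := one_div_le_one_div_of_le (by positivity : (0:ℝ) < 2 * ε ^ 2) hxle
      linarith
    · push_neg at hn₀sgn
      by_cases hempty : 1 ≤ Real.sqrt c + ε ∧ 2 * a / Real.exp 1 < (Real.sqrt c + ε - 1) ^ 2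
      · -- all events empty
        have hμ1 : μ ≤ 1 := by
          rw [← hmean 0]
          have hint : Integrable (X 0) P := by
            refine Integrable.mono' (integrable_const 1) (hXmeas 0).aestronglyMeasurable
              (ae_of_all _ fun ω => ?_)
            rw [Real.norm_eq_abs, abs_of_nonneg (hbdd 0 ω).1]
            exact (hbdd 0 ω).2
          calc ∫ ω, X 0 ω ∂P ≤ ∫ _ω, (1:ℝ) ∂P :=
                integral_mono hint (integrable_const 1) fun ω => (hbdd 0 ω).2
          _ = 1 := by simp
        have hAempty : ∀ n, A n = ∅ := by
          intro n
          rw [Set.eq_empty_iff_forall_notMem]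
          intro ω hω
          simp only [hAdef, Set.mem_setOf_eq] at hω
          have hsum0 : (0:ℝ) ≤ (∑ k ∈ Finset.range (n+1), X k ω) / ((n:ℝ)+1) := by
            apply div_nonneg _ (ht_pos n).le
            exact Finset.sum_nonneg fun k _ => (hbdd k ω).1
          have hrge : -ξ ≤ Real.sqrt (Real.log (4 * K * ((n:ℝ)+1) ^ 2 / δ)
              / (2 * ((n:ℝ)+1))) := by linarith
          have hloge : Real.log (2 * a * ((n:ℝ)+1)) ≤ 2 * a * ((n:ℝ)+1) / Real.exp 1 := by
            have h1 : Real.log (2 * a * ((n:ℝ)+1) / Real.exp 1)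
                ≤ 2 * a * ((n:ℝ)+1) / Real.exp 1 - 1 :=
              Real.log_le_sub_one_of_pos (by positivity)
            rw [Real.log_div (by positivity) (Real.exp_ne_zero 1), Real.log_exp] at h1
            linarith
          have hrlt : Real.sqrt (Real.log (4 * K * ((n:ℝ)+1) ^ 2 / δ)
              / (2 * ((n:ℝ)+1))) < -ξ := by
            have hb1 : Real.log (4 * K * ((n:ℝ)+1) ^ 2 / δ) / (2 * ((n:ℝ)+1))
                ≤ 2 * a / Real.exp 1 := by
              rw [hradius n, div_le_iff₀ (ht_pos n)]
              calc Real.log (2 * a * ((n:ℝ)+1)) ≤ 2 * a * ((n:ℝ)+1) / Real.exp 1 := hloge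
              _ = 2 * a / Real.exp 1 * ((n:ℝ)+1) := by ring
            calc Real.sqrt (Real.log (4 * K * ((n:ℝ)+1) ^ 2 / δ) / (2 * ((n:ℝ)+1)))
                ≤ Real.sqrt (2 * a / Real.exp 1) := Real.sqrt_le_sqrt hb1
            _ < Real.sqrt ((Real.sqrt c + ε - 1) ^ 2) := by
                apply Real.sqrt_lt_sqrt (by positivity) hempty.2
            _ = Real.sqrt c + ε - 1 := Real.sqrt_sq (by linarith [hempty.1])
            _ ≤ -ξ := by
                rw [hsqrtc]
                linarith
          linarith
        have : ∑' n, P (A n) = 0 := by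
          simp [hAempty]
        rw [this]
        exact zero_le'
      · -- final analytic case
        have hne : (Real.sqrt c + ε - 1) ^ 2 ≤ 2 * a / Real.exp 1
            ∨ Real.sqrt c + ε < 1 := by
          rcases not_and_or.1 hempty with h | h
          · right; exact not_le.1 h
          · left; exact not_lt.1 h
        have hLneg : Real.log ((4 * a / c) * Real.log (5 * a / c)) < 0 := by
          by_contra hcon
          push_neg at hcon
          have : 0 ≤ n₀ := by
            rw [hn₀']
            positivity
          linarith
        have h3 := An3 ha1 hc0 hε0 hLneg hne
        refine hSle.trans (ENNReal.ofReal_le_ofReal ?_)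
        rw [hn₀']
        have hid : (1 / c) * Real.log ((4 * a / c) * Real.log (5 * a / c))
            = Real.log ((4 * a / c) * Real.log (5 * a / c)) / c := by ring
        rw [hid]
        linarith
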